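/- Let n ∈ ℕ, h¹, h² ∈ ℝⁿ with h¹ ≠ 0 or h² ≠ 0 allowed, and w¹, w² > 0. For κ < 0 define the conformal factor λ_x^κ = 2/(1 + κ‖x‖²), the scalar Möbius product r ⊗_κ y = exp₀(r log₀(y)) (with exp₀(v) = tanh(√|κ|‖v‖)·v/(√|κ|‖v‖), log₀(y) = artanh(√|κ|‖y‖)·y/(√|κ|‖y‖), both mapping 0 to 0), and the hyperbolic residual f_HR^κ(h¹, h², w¹, w²) = (1/2) ⊗_κ ( (w¹ λ_{h¹}^κ h¹ + w² λ_{h²}^κ h²) / (w¹(λ_{h¹}^κ − 1) + w²(λ_{h²}^κ − 1)) ). If w¹ h¹ + w² h² ≠ 0, then as κ → 0⁻, f_HR^κ(h¹, h², w¹, w²) tends to the weighted arithmetic mean (w¹ h¹ + w² h²)/(w¹ + w²). -/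

import Mathlib

noncomputable section
open Classical Filter

/-- The inverse hyperbolic tangent `artanh = tanh⁻¹` on `(−1, 1)`. -/
def artanh (x : ℝ) : ℝ := (1 / 2) * Real.log ((1 + x) / (1 - x))

/-- The exponential map of the Poincaré ball of curvature `κ` based at the origin. -/
def expZero (κ : ℝ) {n : ℕ} (v : EuclideanSpace ℝ (Fin n)) : EuclideanSpace ℝ (Fin n) :=
  if v = 0 then 0
  else (Real.tanh (Real.sqrt |κ| * ‖v‖) / (Real.sqrt |κ| * ‖v‖)) • v

/-- The logarithmic map of the Poincaré ball of curvature `κ` based at the origin. -/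
def logZero (κ : ℝ) {n : ℕ} (y : EuclideanSpace ℝ (Fin n)) : EuclideanSpace ℝ (Fin n) :=
  if y = 0 then 0
  else (artanh (Real.sqrt |κ| * ‖y‖) / (Real.sqrt |κ| * ‖y‖)) • y

/-- The Möbius scalar multiplication `r ⊗_κ y = exp₀(r log₀(y))`. -/
def mobiusScalarMul (κ : ℝ) {n : ℕ} (r : ℝ) (y : EuclideanSpace ℝ (Fin n)) :
    EuclideanSpace ℝ (Fin n) :=
  expZero κ (r • logZero κ y)

/-- The conformal factor `λ_x^κ = 2/(1 + κ‖x‖²)`. -/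
def conformalFactor (κ : ℝ) {n : ℕ} (x : EuclideanSpace ℝ (Fin n)) : ℝ :=
  2 / (1 + κ * ‖x‖ ^ 2)

/-- The two-point hyperbolic residual (Möbius gyromidpoint)
`f_HR^κ(h¹, h², w¹, w²) = (1/2) ⊗_κ ((w¹λ₁h¹ + w²λ₂h²)/(w¹(λ₁−1) + w²(λ₂−1)))`. -/
def hypResidual (κ : ℝ) {n : ℕ} (h₁ h₂ : EuclideanSpace ℝ (Fin n)) (w₁ w₂ : ℝ) :
    EuclideanSpace ℝ (Fin n) :=
  mobiusScalarMul κ (1 / 2)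
    ((w₁ * (conformalFactor κ h₁ - 1) + w₂ * (conformalFactor κ h₂ - 1))⁻¹ •
      ((w₁ * conformalFactor κ h₁) • h₁ + (w₂ * conformalFactor κ h₂) • h₂))

/- ### Auxiliary lemmas -/

lemma hasDerivAt_artanh_zero : HasDerivAt artanh 1 0 := by
  have h1 : HasDerivAt (fun x : ℝ => (1 + x) / (1 - x)) 2 0 := by
    have := (((hasDerivAt_id (0:ℝ)).const_add 1).div ((hasDerivAt_id (0:ℝ)).const_sub 1)
      (by norm_num))
    simpa [Pi.div_def] using this.congr_deriv (by norm_num)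
  have h2 : HasDerivAt (fun x : ℝ => Real.log ((1 + x) / (1 - x))) (2 / ((1 + 0) / (1 - 0))) 0 :=
    h1.log (by norm_num)
  have h3 := h2.const_mul (1 / 2 : ℝ)
  have h4 : HasDerivAt (fun x : ℝ => (1 / 2) * Real.log ((1 + x) / (1 - x))) 1 0 := by
    refine h3.congr_deriv ?_
    norm_num
  exact h4

lemma hasDerivAt_tanh_zero : HasDerivAt Real.tanh 1 0 := by
  have h : HasDerivAt (fun x => Real.sinh x / Real.cosh x)
      ((Real.cosh 0 * Real.cosh 0 - Real.sinh 0 * Real.sinh 0) / Real.cosh 0 ^ 2) 0 :=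
    (Real.hasDerivAt_sinh 0).div (Real.hasDerivAt_cosh 0) (Real.cosh_pos 0).ne'
  have h2 : HasDerivAt Real.tanh
      ((Real.cosh 0 * Real.cosh 0 - Real.sinh 0 * Real.sinh 0) / Real.cosh 0 ^ 2) 0 := by
    simpa only [← Real.tanh_eq_sinh_div_cosh] using h
  simpa using h2.congr_deriv (by simp)

lemma artanh_zero : artanh 0 = 0 := by simp [artanh]

lemma tendsto_artanh_div : Tendsto (fun t : ℝ => artanh t / t) (nhdsWithin 0 {(0:ℝ)}ᶜ) (nhds 1) := by
  have h := hasDerivAt_iff_tendsto_slope.mp hasDerivAt_artanh_zero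
  refine h.congr fun t => ?_
  simp [slope_def_field, artanh_zero, div_eq_mul_inv, mul_comm]

lemma tendsto_tanh_div : Tendsto (fun t : ℝ => Real.tanh t / t) (nhdsWithin 0 {(0:ℝ)}ᶜ) (nhds 1) := by
  have h := hasDerivAt_iff_tendsto_slope.mp hasDerivAt_tanh_zero
  refine h.congr fun t => ?_
  simp [slope_def_field, Real.tanh_zero, div_eq_mul_inv, mul_comm]

lemma artanh_pos {x : ℝ} (h0 : 0 < x) (h1 : x < 1) : 0 < artanh x := by
  have : (1 : ℝ) < (1 + x) / (1 - x) := by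
    rw [lt_div_iff₀ (by linarith)]
    linarith
  have := Real.log_pos this
  unfold artanh
  linarith

lemma mobius_half_eq {n : ℕ} (κ : ℝ) (hκ : κ < 0) (y : EuclideanSpace ℝ (Fin n))
    (hy : y ≠ 0) (ha : Real.sqrt |κ| * ‖y‖ < 1) :
    mobiusScalarMul κ (1/2) y =
      ((Real.tanh (Real.sqrt |κ| *
          (((1/2) * (artanh (Real.sqrt |κ| * ‖y‖) / (Real.sqrt |κ| * ‖y‖))) * ‖y‖)) /
        (Real.sqrt |κ| *
          (((1/2) * (artanh (Real.sqrt |κ| * ‖y‖) / (Real.sqrt |κ| * ‖y‖))) * ‖y‖))) *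
        ((1/2) * (artanh (Real.sqrt |κ| * ‖y‖) / (Real.sqrt |κ| * ‖y‖)))) • y := by
  have hs : 0 < Real.sqrt |κ| := Real.sqrt_pos.2 (abs_pos.2 hκ.ne)
  have hyn : 0 < ‖y‖ := norm_pos_iff.2 hy
  have hapos : 0 < Real.sqrt |κ| * ‖y‖ := mul_pos hs hyn
  set c : ℝ := (1/2) * (artanh (Real.sqrt |κ| * ‖y‖) / (Real.sqrt |κ| * ‖y‖)) with hc
  have hcpos : 0 < c :=
    mul_pos (by norm_num) (div_pos (artanh_pos hapos ha) hapos)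
  have hcy : c • y ≠ 0 := smul_ne_zero hcpos.ne' hy
  have hlog : logZero κ y = (artanh (Real.sqrt |κ| * ‖y‖) / (Real.sqrt |κ| * ‖y‖)) • y :=
    if_neg hy
  have hv : (1/2 : ℝ) • logZero κ y = c • y := by
    rw [hlog, smul_smul, hc]
  unfold mobiusScalarMul
  rw [hv]
  unfold expZero
  rw [if_neg hcy]
  have hnorm : ‖c • y‖ = c * ‖y‖ := by
    rw [norm_smul, Real.norm_eq_abs, abs_of_pos hcpos]
  rw [hnorm, smul_smul]

/-- As `κ → 0⁻`, the hyperbolic residual (two-point Möbius gyromidpoint) tends to the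
weighted arithmetic mean `(w¹h¹ + w²h²)/(w¹ + w²)`. -/
theorem hypResidual_tendsto_arithmetic_mean
    (n : ℕ) (h₁ h₂ : EuclideanSpace ℝ (Fin n)) (w₁ w₂ : ℝ)
    (hw₁ : 0 < w₁) (hw₂ : 0 < w₂)
    (hne : w₁ • h₁ + w₂ • h₂ ≠ 0) :
    Tendsto (fun κ : ℝ => hypResidual κ h₁ h₂ w₁ w₂)
      (nhdsWithin 0 (Set.Iio 0))
      (nhds ((w₁ + w₂)⁻¹ • (w₁ • h₁ + w₂ • h₂))) := by
  set l : Filter ℝ := nhdsWithin 0 (Set.Iio 0) with hl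
  set m : EuclideanSpace ℝ (Fin n) := (w₁ + w₂)⁻¹ • (w₁ • h₁ + w₂ • h₂) with hm
  set g : ℝ → EuclideanSpace ℝ (Fin n) := fun κ =>
    (w₁ * (conformalFactor κ h₁ - 1) + w₂ * (conformalFactor κ h₂ - 1))⁻¹ •
      ((w₁ * conformalFactor κ h₁) • h₁ + (w₂ * conformalFactor κ h₂) • h₂) with hg_def
  have hw : (0:ℝ) < w₁ + w₂ := by linarith
  -- limit of conformal factors
  have hcf : ∀ x : EuclideanSpace ℝ (Fin n),
      Tendsto (fun κ : ℝ => conformalFactor κ x) (nhds 0) (nhds 2) := by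
    intro x
    have hden : Tendsto (fun κ : ℝ => 1 + κ * ‖x‖ ^ 2) (nhds 0) (nhds 1) := by
      have : Tendsto (fun κ : ℝ => 1 + κ * ‖x‖ ^ 2) (nhds 0) (nhds (1 + 0 * ‖x‖ ^ 2)) :=
        tendsto_const_nhds.add (tendsto_id.mul_const _)
      simpa using this
    have := (tendsto_const_nhds (x := (2:ℝ))).div hden one_ne_zero
    simpa [conformalFactor, Pi.div_def] using this
  -- limit of g
  set G : EuclideanSpace ℝ (Fin n) :=
    (w₁ * (2 - 1) + w₂ * (2 - 1))⁻¹ • ((w₁ * 2) • h₁ + (w₂ * 2) • h₂) with hG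
  have hG2 : G = (2:ℝ) • m := by
    rw [hG, hm]
    have h12 : (w₁ * (2 - 1) + w₂ * (2 - 1)) = w₁ + w₂ := by ring
    rw [h12, smul_smul, smul_add, smul_smul, smul_smul, smul_add, smul_smul, smul_smul]
    congr 2 <;> ring
  have hmne : m ≠ 0 := smul_ne_zero (inv_ne_zero hw.ne') hne
  have hGne : G ≠ 0 := by
    rw [hG2]
    exact smul_ne_zero two_ne_zero hmne
  have hg0 : Tendsto g (nhds 0) (nhds G) := by
    apply Tendsto.smul
    · exact (((hcf h₁).sub_const 1).const_mul w₁ |>.add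
        (((hcf h₂).sub_const 1).const_mul w₂)).inv₀ (by norm_num; linarith)
    · exact (((hcf h₁).const_mul w₁).smul_const h₁).add (((hcf h₂).const_mul w₂).smul_const h₂)
  have hg : Tendsto g l (nhds G) := hg0.mono_left nhdsWithin_le_nhds
  have hgn : Tendsto (fun κ => ‖g κ‖) l (nhds ‖G‖) := hg.norm
  have hGn : (0:ℝ) < ‖G‖ := norm_pos_iff.2 hGne
  -- eventual facts
  have hκneg : ∀ᶠ κ in l, κ < 0 := eventually_mem_nhdsWithin
  have hnormpos : ∀ᶠ κ in l, 0 < ‖g κ‖ := hgn.eventually (eventually_gt_nhds hGn)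
  have hs0 : Tendsto (fun κ : ℝ => Real.sqrt |κ|) l (nhds 0) := by
    have : Tendsto (fun κ : ℝ => Real.sqrt |κ|) (nhds 0) (nhds (Real.sqrt |0|)) :=
      (Real.continuous_sqrt.comp continuous_abs).tendsto 0
    simpa using this.mono_left nhdsWithin_le_nhds
  set a : ℝ → ℝ := fun κ => Real.sqrt |κ| * ‖g κ‖ with ha_def
  have ha0 : Tendsto a l (nhds 0) := by
    have := hs0.mul hgn
    simpa using this
  have ha1 : ∀ᶠ κ in l, a κ < 1 := ha0.eventually (eventually_lt_nhds one_pos)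
  have hapos : ∀ᶠ κ in l, 0 < a κ := by
    filter_upwards [hκneg, hnormpos] with κ h1 h2
    exact mul_pos (Real.sqrt_pos.2 (abs_pos.2 h1.ne)) h2
  have hane : Tendsto a l (nhdsWithin 0 {(0:ℝ)}ᶜ) := by
    rw [tendsto_nhdsWithin_iff]
    exact ⟨ha0, hapos.mono fun κ h => ne_of_gt h⟩
  set c : ℝ → ℝ := fun κ => (1/2) * (artanh (a κ) / a κ) with hc_def
  have hc : Tendsto c l (nhds (1/2)) := by
    have h := (tendsto_artanh_div.comp hane).const_mul (1/2 : ℝ)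
    simpa [hc_def, Function.comp] using h
  have hcpos : ∀ᶠ κ in l, 0 < c κ := by
    filter_upwards [hapos, ha1] with κ h1 h2
    exact mul_pos (by norm_num) (div_pos (artanh_pos h1 h2) h1)
  set b : ℝ → ℝ := fun κ => Real.sqrt |κ| * (c κ * ‖g κ‖) with hb_def
  have hb0 : Tendsto b l (nhds 0) := by
    have h := hs0.mul (hc.mul hgn)
    simpa [hb_def] using h
  have hbpos : ∀ᶠ κ in l, 0 < b κ := by
    filter_upwards [hκneg, hnormpos, hcpos] with κ h1 h2 h3
    exact mul_pos (Real.sqrt_pos.2 (abs_pos.2 h1.ne)) (mul_pos h3 h2)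
  have hbne : Tendsto b l (nhdsWithin 0 {(0:ℝ)}ᶜ) := by
    rw [tendsto_nhdsWithin_iff]
    exact ⟨hb0, hbpos.mono fun κ h => ne_of_gt h⟩
  set σ : ℝ → ℝ := fun κ => (Real.tanh (b κ) / b κ) * c κ with hσ_def
  have hσ : Tendsto σ l (nhds (1/2)) := by
    have h := (tendsto_tanh_div.comp hbne).mul hc
    simpa [hσ_def, Function.comp] using h
  -- the limit of σ • g
  have hfinal : Tendsto (fun κ => σ κ • g κ) l (nhds ((1/2 : ℝ) • G)) := hσ.smul hg
  have hGm : (1/2 : ℝ) • G = m := by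
    rw [hG2, smul_smul]
    norm_num
  rw [hGm] at hfinal
  -- eventual equality
  refine hfinal.congr' ?_
  filter_upwards [hκneg, hnormpos, ha1] with κ h1 h2 h3
  have hyne : g κ ≠ 0 := norm_pos_iff.1 h2
  have := mobius_half_eq κ h1 (g κ) hyne h3
  simp only [hσ_def, hb_def, hc_def, ha_def]
  exact this.symm
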